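/- Let V_a be the simple graph on vertex set {1,2,...,12} whose edges are those of the basic block B on {1,...,7} (edge set {12,14,15,17,23,24,25,26,27,34,35,45,46,47,67}) together with the edges {1,8},{1,9},{7,10},{7,11},{10,11},{10,12},{11,12}. Then a 2-coloring c of V_a with c(1) = gray is a legal 2-coloring of V_a if and only if its gray class is exactly {1,3,5,6,7,12}. In particular, assuming vertex 1 is gray, V_a has a unique legal 2-coloring; in it the two vertices 8 and 9 (labeled a) have the same color (white), the vertex 12 (labeled ā) has the other color (gray), and each of 8, 9, 12 has a color different from all of its neighbors in V_a. -/

import Mathlib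

/-- A set `U` of vertices of a simple graph `G` induces a linear forest:
the induced subgraph is acyclic and every vertex of `U` has at most 2 neighbors in `U`. -/
def InducesLinearForest {V : Type*} (G : SimpleGraph V) (U : Set V) : Prop :=
  (G.induce U).IsAcyclic ∧ ∀ v ∈ U, {w | w ∈ U ∧ G.Adj v w}.ncard ≤ 2

/-- A legal 2-coloring of `G` (`true` = gray, `false` = white): each color class
induces a linear forest. -/
def IsLegal2Coloring {V : Type*} (G : SimpleGraph V) (c : V → Bool) : Prop :=
  InducesLinearForest G {v | c v = true} ∧ InducesLinearForest G {v | c v = false}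

/-- The edge set of the basic building block `B`. -/
def BEdges : Set (ℕ × ℕ) :=
  {(1,2),(1,4),(1,5),(1,7),(2,3),(2,4),(2,5),(2,6),(2,7),
   (3,4),(3,5),(4,5),(4,6),(4,7),(6,7)}

/-- Vertex set {1, …, 12}. -/
abbrev V12 : Type := {m : ℕ // m ∈ Finset.Icc 1 12}

/-- The edge set of the variable gadget `V_a`: the block `B` together with pendant
vertices 8, 9 at vertex 1, adjacent vertices 10, 11 at vertex 7, and vertex 12
adjacent to both 10 and 11. -/
def VaEdges : Set (ℕ × ℕ) :=
  BEdges ∪ {(1,8),(1,9),(7,10),(7,11),(10,11),(10,12),(11,12)}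

/-- The variable gadget `V_a` on vertex set {1, …, 12}. -/
def VaGraph : SimpleGraph V12 :=
  SimpleGraph.fromRel (fun u v => (u.val, v.val) ∈ VaEdges)

/-! ### Decidability helpers -/

def edgeList : List (ℕ × ℕ) :=
  [(1,2),(1,4),(1,5),(1,7),(2,3),(2,4),(2,5),(2,6),(2,7),
   (3,4),(3,5),(4,5),(4,6),(4,7),(6,7),
   (1,8),(1,9),(7,10),(7,11),(10,11),(10,12),(11,12)]

instance : DecidablePred (· ∈ VaEdges) := fun p =>
  decidable_of_iff (p ∈ edgeList) (by
    simp only [VaEdges, BEdges, edgeList, Set.mem_union, Set.mem_insert_iff,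
      Set.mem_singleton_iff, List.mem_cons, List.not_mem_nil, or_false, or_assoc])

instance : DecidableRel VaGraph.Adj := fun a b =>
  decidable_of_iff _ (SimpleGraph.fromRel_adj _ a b).symm

/-- The unique legal coloring (with vertex 1 gray). -/
def c₀ : V12 → Bool := fun v =>
  decide (v.val = 1 ∨ v.val = 3 ∨ v.val = 5 ∨ v.val = 6 ∨ v.val = 7 ∨ v.val = 12)

/-! ### Acyclicity from a path labeling -/

lemma isAcyclic_of_pathLabel {V : Type*} {G : SimpleGraph V} (f : V → ℕ)
    (hinj : Function.Injective f)
    (h : ∀ u v, G.Adj u v → f u + 1 = f v ∨ f v + 1 = f u) : G.IsAcyclic := by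
  rw [SimpleGraph.isAcyclic_iff_forall_adj_isBridge]
  suffices H : ∀ u v, G.Adj u v → f u + 1 = f v → G.IsBridge s(u, v) by
    intro u v huv
    rcases h u v huv with h' | h'
    · exact H u v huv h'
    · rw [Sym2.eq_swap]; exact H v u huv.symm h'
  intro u v huv hfuv
  rw [SimpleGraph.isBridge_iff]
  refine fun hreach => ?_
  obtain ⟨p⟩ := hreach
  obtain ⟨d, -, hd1, hd2⟩ := p.exists_boundary_dart {x | f x ≤ f u}
    (by simp) (by simp only [Set.mem_setOf_eq]; omega)
  simp only [Set.mem_setOf_eq] at hd1 hd2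
  have hadj := d.adj
  rw [SimpleGraph.deleteEdges_adj] at hadj
  obtain ⟨hG, hne⟩ := hadj
  have hcons : f d.fst + 1 = f d.snd := by
    rcases h _ _ hG with h' | h' <;> omega
  have hfst : d.fst = u := hinj (by omega)
  have hsnd : d.snd = v := hinj (by omega)
  apply hne
  rw [Set.mem_singleton_iff, hfst, hsnd]

/-! ### A triangle kills acyclicity -/

lemma not_acyclic_of_triangle {V : Type*} {G : SimpleGraph V} {a b c : V}
    (hab : G.Adj a b) (hbc : G.Adj b c) (hac : G.Adj a c) : ¬ G.IsAcyclic := by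
  intro h
  have hb := (SimpleGraph.isAcyclic_iff_forall_adj_isBridge.mp h) hab
  rw [SimpleGraph.isBridge_iff] at hb
  apply hb
  rw [SimpleGraph.reachable_delete_edges_iff_exists_walk]
  refine ⟨SimpleGraph.Walk.cons hac (SimpleGraph.Walk.cons hbc.symm SimpleGraph.Walk.nil), ?_⟩
  simp only [SimpleGraph.Walk.edges_cons, SimpleGraph.Walk.edges_nil, List.mem_cons,
    List.not_mem_nil, or_false]
  rintro (h' | h')
  · rw [Sym2.eq_iff] at h'
    rcases h' with ⟨-, h'⟩ | ⟨h', -⟩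
    · exact hbc.ne h'
    · exact hac.ne h'
  · rw [Sym2.eq_iff] at h'
    rcases h' with ⟨h', -⟩ | ⟨h', -⟩
    · exact hac.ne h'
    · exact hab.ne h'

lemma no_mono_tri {f : V12 → Bool} (hL : IsLegal2Coloring VaGraph f) {a b c : V12}
    (hab : VaGraph.Adj a b) (hbc : VaGraph.Adj b c) (hac : VaGraph.Adj a c) :
    ¬(f a = f b ∧ f b = f c) := by
  rintro ⟨h1, h2⟩
  rcases hfa : f a with _ | _
  · refine not_acyclic_of_triangle (G := VaGraph.induce {v | f v = false})
      (a := ⟨a, hfa⟩) (b := ⟨b, h1.symm.trans hfa⟩) (c := ⟨c, h2.symm.trans (h1.symm.trans hfa)⟩)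
      hab hbc hac hL.2.1
  · refine not_acyclic_of_triangle (G := VaGraph.induce {v | f v = true})
      (a := ⟨a, hfa⟩) (b := ⟨b, h1.symm.trans hfa⟩) (c := ⟨c, h2.symm.trans (h1.symm.trans hfa)⟩)
      hab hbc hac hL.1.1

/-! ### Degree certificates -/

lemma card3 {α : Type*} {S : Set α} (hS : S.Finite) (h : S.ncard ≤ 2) {x y z : α}
    (hx : x ∈ S) (hy : y ∈ S) (hz : z ∈ S)
    (hxy : x ≠ y) (hxz : x ≠ z) (hyz : y ≠ z) : False := by
  have hsub : ({x, y, z} : Set α) ⊆ S := by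
    intro w hw
    rcases hw with rfl | rfl | rfl
    exacts [hx, hy, hz]
  have h3 : ({x, y, z} : Set α).ncard = 3 := by
    rw [Set.ncard_insert_of_notMem (by simp [hxy, hxz]),
      Set.ncard_insert_of_notMem (by simp [hyz]), Set.ncard_singleton]
  have := Set.ncard_le_ncard hsub hS
  omega

lemma nb3 {f : V12 → Bool} {v x y z : V12}
    (h : {w | f w = f v ∧ VaGraph.Adj v w}.ncard ≤ 2)
    (ax : VaGraph.Adj v x) (ay : VaGraph.Adj v y) (az : VaGraph.Adj v z)
    (hxy : x ≠ y) (hxz : x ≠ z) (hyz : y ≠ z) :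
    ¬(f x = f v ∧ f y = f v ∧ f z = f v) := by
  rintro ⟨e1, e2, e3⟩
  exact card3 (Set.toFinite _) h ⟨e1, ax⟩ ⟨e2, ay⟩ ⟨e3, az⟩ hxy hxz hyz

lemma setOf_ncard (P : V12 → Prop) [DecidablePred P] :
    {w | P w}.ncard = (Finset.univ.filter P).card := by
  rw [Set.ncard_eq_toFinset_card', Set.toFinset_setOf]

/-! ### The key pinning lemma, by brute force over the colors -/

set_option maxHeartbeats 2000000 in
set_option maxRecDepth 40000 in
set_option synthInstance.maxHeartbeats 2000000 in
set_option synthInstance.maxSize 10000 in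
lemma key : ∀ b1 b2 b3 b4 b5 b6 b7 b8 b9 b10 b11 b12 : Bool, b1 = true →
    ¬(b5 = b1 ∧ b7 = b1 ∧ b8 = b1) →
    ¬(b1 = b2 ∧ b2 = b7) →
    ¬(b1 = b4 ∧ b4 = b5) →
    ¬(b1 = b2 ∧ b3 = b2 ∧ b6 = b2) →
    ¬(b2 = b4 ∧ b4 = b5) →
    ¬(b2 = b4 ∧ b4 = b6) →
    ¬(b3 = b2 ∧ b5 = b2 ∧ b7 = b2) →
    ¬(b10 = b11 ∧ b11 = b12) →
    ¬(b1 = b7 ∧ b6 = b7 ∧ b10 = b7) →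
    ¬(b4 = b6 ∧ b6 = b7) →
    ¬(b1 = b4 ∧ b3 = b4 ∧ b6 = b4) →
    ¬(b3 = b4 ∧ b4 = b5) →
    ¬(b2 = b3 ∧ b3 = b4) →
    ¬(b1 = b4 ∧ b4 = b7) →
    ¬(b5 = b2 ∧ b6 = b2 ∧ b7 = b2) →
    ¬(b1 = b2 ∧ b2 = b4) →
    ¬(b5 = b1 ∧ b7 = b1 ∧ b9 = b1) →
    ¬(b1 = b2 ∧ b5 = b2 ∧ b6 = b2) →
    ¬(b1 = b7 ∧ b6 = b7 ∧ b11 = b7) →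
    ¬(b2 = b4 ∧ b4 = b7) →
    (b1 = true ∧ b2 = false ∧ b3 = true ∧ b4 = false ∧ b5 = true ∧ b6 = true ∧ b7 = true ∧ b8 = false ∧ b9 = false ∧ b10 = false ∧ b11 = false ∧ b12 = true) := by decide

/-! ### The target coloring is legal -/

instance instDecT : DecidablePred (· ∈ {v : V12 | c₀ v = true}) :=
  fun v => inferInstanceAs (Decidable (c₀ v = true))
instance instDecF : DecidablePred (· ∈ {v : V12 | c₀ v = false}) :=
  fun v => inferInstanceAs (Decidable (c₀ v = false))
instance instAdjT : DecidableRel (VaGraph.induce {v : V12 | c₀ v = true}).Adj :=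
  fun a b => inferInstanceAs (Decidable (VaGraph.Adj a b))
instance instAdjF : DecidableRel (VaGraph.induce {v : V12 | c₀ v = false}).Adj :=
  fun a b => inferInstanceAs (Decidable (VaGraph.Adj a b))

lemma legalc0 : IsLegal2Coloring VaGraph c₀ := by
  refine ⟨⟨?_, ?_⟩, ⟨?_, ?_⟩⟩
  · exact isAcyclic_of_pathLabel (fun v => (fun n => match n with | 3 => 0 | 5 => 1 | 1 => 2 | 7 => 3 | 6 => 4 | 12 => 6 | _ => 9) v.1.1)
      (by decide) (by decide)
  · intro v _
    rw [setOf_ncard]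
    revert v
    decide
  · exact isAcyclic_of_pathLabel (fun v => (fun n => match n with | 2 => 0 | 4 => 1 | 10 => 3 | 11 => 4 | 8 => 6 | 9 => 8 | _ => 20) v.1.1)
      (by decide) (by decide)
  · intro v _
    rw [setOf_ncard]
    revert v
    decide

set_option maxRecDepth 4000 in
/-- A 2-coloring `c` of `V_a` with `c 1 = gray` is legal iff its gray class is
exactly {1,3,5,6,7,12}.  In particular, in the unique such legal coloring the two
vertices 8 and 9 are both white, vertex 12 is gray, and each of 8, 9, 12 has a
color different from all of its neighbors in `V_a`. -/
theorem stmt1 (c : V12 → Bool) (h1 : c ⟨1, by decide⟩ = true) :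
    (IsLegal2Coloring VaGraph c ↔
      {v : V12 | c v = true} = {v : V12 | v.val ∈ ({1,3,5,6,7,12} : Set ℕ)}) ∧
    (IsLegal2Coloring VaGraph c →
      c ⟨8, by decide⟩ = c ⟨9, by decide⟩ ∧
      c ⟨8, by decide⟩ = false ∧
      c ⟨12, by decide⟩ ≠ c ⟨8, by decide⟩ ∧
      (∀ w, VaGraph.Adj ⟨8, by decide⟩ w → c w ≠ c ⟨8, by decide⟩) ∧
      (∀ w, VaGraph.Adj ⟨9, by decide⟩ w → c w ≠ c ⟨9, by decide⟩) ∧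
      (∀ w, VaGraph.Adj ⟨12, by decide⟩ w → c w ≠ c ⟨12, by decide⟩)) := by
  have hmain : IsLegal2Coloring VaGraph c → c = c₀ := by
    intro hL
    have hdeg : ∀ v : V12, {w | c w = c v ∧ VaGraph.Adj v w}.ncard ≤ 2 := by
      intro v
      rcases hb : c v with _ | _
      · exact hL.2.2 v hb
      · exact hL.1.2 v hb
    have hk := key (c ⟨1, by decide⟩) (c ⟨2, by decide⟩) (c ⟨3, by decide⟩)
      (c ⟨4, by decide⟩) (c ⟨5, by decide⟩) (c ⟨6, by decide⟩) (c ⟨7, by decide⟩)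
      (c ⟨8, by decide⟩) (c ⟨9, by decide⟩) (c ⟨10, by decide⟩) (c ⟨11, by decide⟩)
      (c ⟨12, by decide⟩) h1
      (nb3 (hdeg ⟨1, by decide⟩) (by decide) (by decide) (by decide) (by decide) (by decide) (by decide))
      (no_mono_tri hL (by decide) (by decide) (by decide))
      (no_mono_tri hL (by decide) (by decide) (by decide))
      (nb3 (hdeg ⟨2, by decide⟩) (by decide) (by decide) (by decide) (by decide) (by decide) (by decide))
      (no_mono_tri hL (by decide) (by decide) (by decide))
      (no_mono_tri hL (by decide) (by decide) (by decide))
      (nb3 (hdeg ⟨2, by decide⟩) (by decide) (by decide) (by decide) (by decide) (by decide) (by decide))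
      (no_mono_tri hL (by decide) (by decide) (by decide))
      (nb3 (hdeg ⟨7, by decide⟩) (by decide) (by decide) (by decide) (by decide) (by decide) (by decide))
      (no_mono_tri hL (by decide) (by decide) (by decide))
      (nb3 (hdeg ⟨4, by decide⟩) (by decide) (by decide) (by decide) (by decide) (by decide) (by decide))
      (no_mono_tri hL (by decide) (by decide) (by decide))
      (no_mono_tri hL (by decide) (by decide) (by decide))
      (no_mono_tri hL (by decide) (by decide) (by decide))
      (nb3 (hdeg ⟨2, by decide⟩) (by decide) (by decide) (by decide) (by decide) (by decide) (by decide))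
      (no_mono_tri hL (by decide) (by decide) (by decide))
      (nb3 (hdeg ⟨1, by decide⟩) (by decide) (by decide) (by decide) (by decide) (by decide) (by decide))
      (nb3 (hdeg ⟨2, by decide⟩) (by decide) (by decide) (by decide) (by decide) (by decide) (by decide))
      (nb3 (hdeg ⟨7, by decide⟩) (by decide) (by decide) (by decide) (by decide) (by decide) (by decide))
      (no_mono_tri hL (by decide) (by decide) (by decide))
    obtain ⟨e1, e2, e3, e4, e5, e6, e7, e8, e9, e10, e11, e12⟩ := hk
    funext v
    obtain ⟨n, hn⟩ := v
    have hn' := Finset.mem_Icc.mp hn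
    obtain ⟨hn1, hn2⟩ := hn'
    interval_cases n
    exacts [e1, e2, e3, e4, e5, e6, e7, e8, e9, e10, e11, e12]
  constructor
  · constructor
    · intro hL
      rw [hmain hL]
      ext v
      simp only [Set.mem_setOf_eq, Set.mem_insert_iff, Set.mem_singleton_iff, c₀,
        decide_eq_true_eq]
    · intro hset
      have hc : c = c₀ := by
        funext v
        have hv := Set.ext_iff.mp hset v
        simp only [Set.mem_setOf_eq, Set.mem_insert_iff, Set.mem_singleton_iff] at hv
        rcases h' : c v with _ | _
        · symm
          simp only [c₀, decide_eq_false_iff_not]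
          intro hx
          have hcv := hv.mpr hx
          rw [h'] at hcv
          exact Bool.noConfusion hcv
        · symm
          simp only [c₀, decide_eq_true_eq]
          exact hv.mp h'
      rw [hc]
      exact legalc0
  · intro hL
    have hc := hmain hL
    subst hc
    refine ⟨by decide, by decide, by decide, by decide, by decide, by decide⟩
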